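/- arXiv:1310.5444 — 3 statements merged into one kernel-verified Lean document; each statement's English description precedes it below -/
import Mathlib

section
/- Let 1 < p < ∞ and let w be an A_p weight on ℝ², with dual weight w⋆ := w^{−1/(p−1)}. Then for every measurable f : ℝ² → [0,∞) and every x ∈ ℝ², the pointwise bound M^D(f·w⋆)(x) ≤ [w]_{A_p}^{1/(p−1)} · ( M^D_w( (M^D_{w⋆} f)^{p/p'} · w^{−1} )(x) )^{p'/p} holds, where p' = p/(p−1). -/
open MeasureTheory ENNReal

noncomputable section

abbrev R2 := EuclideanSpace ℝ (Fin 2)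

/-- Euclidean balls and (half-open) axis-parallel squares in ℝ². -/
def IsBallOrSquare (B : Set R2) : Prop :=
  (∃ c : R2, ∃ r : ℝ, 0 < r ∧ B = Metric.ball c r) ∨
  (∃ (a : Fin 2 → ℝ) (s : ℝ), 0 < s ∧ B = {x : R2 | ∀ i, a i ≤ x i ∧ x i < a i + s})

/-- The `A_p` characteristic of a weight `w`. -/
def ApConst (p : ℝ) (w : R2 → ℝ) : ℝ≥0∞ :=
  (⨆ (B : Set R2) (_ : IsBallOrSquare B),
      ((∫⁻ x in B, ENNReal.ofReal (w x)) ^ (1 / p) *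
        (∫⁻ x in B, ENNReal.ofReal (w x ^ (-(1 / (p - 1))))) ^ (1 - 1 / p)) /
        volume B) ^ p

/-- The dyadic cube `[2^k m₁, 2^k (m₁+1)) × [2^k m₂, 2^k (m₂+1))` in ℝ². -/
def dyadicCube (k : ℤ) (m : Fin 2 → ℤ) : Set R2 :=
  {x : R2 | ∀ i, (2 : ℝ) ^ k * (m i : ℝ) ≤ x i ∧ x i < (2 : ℝ) ^ k * ((m i : ℝ) + 1)}

/-- Dyadic maximal function of an `ℝ≥0∞`-valued function. -/
def MDE (F : R2 → ℝ≥0∞) (x : R2) : ℝ≥0∞ :=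
  ⨆ (k : ℤ) (m : Fin 2 → ℤ) (_ : x ∈ dyadicCube k m),
    (volume (dyadicCube k m))⁻¹ * ∫⁻ y in dyadicCube k m, F y

/-- Weighted dyadic maximal function of an `ℝ≥0∞`-valued function. -/
def MDwE (w : R2 → ℝ) (F : R2 → ℝ≥0∞) (x : R2) : ℝ≥0∞ :=
  ⨆ (k : ℤ) (m : Fin 2 → ℤ) (_ : x ∈ dyadicCube k m),
    (∫⁻ y in dyadicCube k m, ENNReal.ofReal (w y))⁻¹ *
      ∫⁻ y in dyadicCube k m, F y * ENNReal.ofReal (w y)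

/- ### Auxiliary lemmas -/

lemma dyadicCube_preimage (k : ℤ) (m : Fin 2 → ℤ) :
    dyadicCube k m = (MeasurableEquiv.toLp 2 (Fin 2 → ℝ)).symm ⁻¹'
      (Set.univ.pi fun i => Set.Ico ((2:ℝ)^k * (m i : ℝ)) ((2:ℝ)^k * ((m i : ℝ) + 1))) := by
  ext x
  simp [dyadicCube, Set.mem_pi, MeasurableEquiv.toLp_symm_apply]

lemma measurableSet_dyadicCube (k : ℤ) (m : Fin 2 → ℤ) :
    MeasurableSet (dyadicCube k m) := by
  rw [dyadicCube_preimage]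
  exact (MeasurableEquiv.toLp 2 (Fin 2 → ℝ)).symm.measurable
    (MeasurableSet.univ_pi fun i => measurableSet_Ico)

lemma volume_dyadicCube (k : ℤ) (m : Fin 2 → ℤ) :
    volume (dyadicCube k m) = ENNReal.ofReal ((2:ℝ)^k) ^ 2 := by
  rw [dyadicCube_preimage,
    (EuclideanSpace.volume_preserving_symm_measurableEquiv_toLp (Fin 2)).measure_preimage
      ((MeasurableSet.univ_pi fun i => measurableSet_Ico).nullMeasurableSet)]
  rw [volume_pi_pi]
  have : ∀ i : Fin 2, volume (Set.Ico ((2:ℝ)^k * (m i : ℝ)) ((2:ℝ)^k * ((m i : ℝ) + 1)))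
      = ENNReal.ofReal ((2:ℝ)^k) := by
    intro i
    rw [Real.volume_Ico]
    congr 1
    ring
  simp only [this]
  rw [Finset.prod_const]
  simp

lemma volume_dyadicCube_pos (k : ℤ) (m : Fin 2 → ℤ) : 0 < volume (dyadicCube k m) := by
  rw [volume_dyadicCube]
  have : (0:ℝ) < (2:ℝ)^k := zpow_pos (by norm_num) k
  positivity

lemma volume_dyadicCube_ne_top (k : ℤ) (m : Fin 2 → ℤ) : volume (dyadicCube k m) ≠ ⊤ := by
  rw [volume_dyadicCube]
  exact pow_ne_top ofReal_ne_top

lemma dyadicCube_subset_closedBall (k : ℤ) (m : Fin 2 → ℤ) :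
    ∃ R : ℝ, dyadicCube k m ⊆ Metric.closedBall 0 R := by
  refine ⟨Real.sqrt (∑ i : Fin 2, (|(2:ℝ)^k * (m i : ℝ)| + (2:ℝ)^k)^2), fun x hx => ?_⟩
  rw [Metric.mem_closedBall, dist_zero_right, EuclideanSpace.norm_eq]
  apply Real.sqrt_le_sqrt
  apply Finset.sum_le_sum
  intro i _
  have h2k : (0:ℝ) < (2:ℝ)^k := zpow_pos (by norm_num) k
  have hxi := hx i
  have habs : ‖x i‖ ≤ |(2:ℝ)^k * (m i : ℝ)| + (2:ℝ)^k := by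
    rw [Real.norm_eq_abs, abs_le]
    constructor
    · have : -(|(2:ℝ)^k * (m i : ℝ)| + (2:ℝ)^k) ≤ (2:ℝ)^k * (m i : ℝ) := by
        have := neg_abs_le ((2:ℝ)^k * (m i : ℝ))
        linarith
      linarith [hxi.1]
    · have := le_abs_self ((2:ℝ)^k * (m i : ℝ))
      have h2 := hxi.2
      nlinarith
  calc ‖x i‖^2 ≤ (|(2:ℝ)^k * (m i : ℝ)| + (2:ℝ)^k)^2 :=
        pow_le_pow_left₀ (norm_nonneg _) habs 2
    _ = _ := rfl

lemma setLIntegral_dyadicCube_lt_top {g : R2 → ℝ} (hg : LocallyIntegrable g volume)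
    (k : ℤ) (m : Fin 2 → ℤ) :
    ∫⁻ y in dyadicCube k m, ENNReal.ofReal (g y) < ⊤ := by
  obtain ⟨R, hR⟩ := dyadicCube_subset_closedBall k m
  have h1 : IntegrableOn g (Metric.closedBall 0 R) volume :=
    hg.integrableOn_isCompact (isCompact_closedBall _ _)
  calc ∫⁻ y in dyadicCube k m, ENNReal.ofReal (g y)
      ≤ ∫⁻ y in Metric.closedBall (0:R2) R, ENNReal.ofReal (g y) := lintegral_mono_set hR
    _ < ⊤ := h1.setLIntegral_lt_top

lemma setLIntegral_dyadicCube_pos {g : R2 → ℝ} (hg : AEMeasurable g volume)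
    (hgpos : ∀ x, 0 < g x) (k : ℤ) (m : Fin 2 → ℤ) :
    0 < ∫⁻ y in dyadicCube k m, ENNReal.ofReal (g y) := by
  rw [pos_iff_ne_zero]
  intro h0
  have hmeas : AEMeasurable (fun y => ENNReal.ofReal (g y))
      (volume.restrict (dyadicCube k m)) :=
    ENNReal.measurable_ofReal.comp_aemeasurable hg.restrict
  have hz := (lintegral_eq_zero_iff' hmeas).mp h0
  have : ∀ᵐ y ∂(volume.restrict (dyadicCube k m)), False := by
    filter_upwards [hz] with y hy
    exact absurd hy (ENNReal.ofReal_pos.mpr (hgpos y)).ne'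
  have hvol : volume.restrict (dyadicCube k m) Set.univ = 0 := by
    have h := ae_iff.mp this
    simpa using h
  rw [Measure.restrict_apply_univ] at hvol
  exact absurd hvol (volume_dyadicCube_pos k m).ne'

lemma isBallOrSquare_dyadicCube (k : ℤ) (m : Fin 2 → ℤ) :
    IsBallOrSquare (dyadicCube k m) := by
  refine Or.inr ⟨fun i => (2:ℝ)^k * (m i : ℝ), (2:ℝ)^k, zpow_pos (by norm_num) k, ?_⟩
  ext x
  refine forall_congr' fun i => and_congr_right' ?_
  rw [mul_add, mul_one]

/-- Pointwise bound: `M^D (f w⋆) ≤ [w]_{A_p}^{1/(p-1)} ( M^D_w ((M^D_{w⋆} f)^{p/p'} w⁻¹) )^{p'/p}`,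
where `w⋆ = w^{-1/(p-1)}` and `p' = p/(p-1)`. -/
theorem stmt3 (p : ℝ) (hp : 1 < p)
    (w : R2 → ℝ) (hw : ∀ x, 0 < w x)
    (hwloc : LocallyIntegrable w volume)
    (hwsloc : LocallyIntegrable (fun x => w x ^ (-(1 / (p - 1)))) volume)
    (hAp : ApConst p w ≠ ⊤)
    (f : R2 → ℝ) (hf : Measurable f) (hf0 : ∀ x, 0 ≤ f x) (x : R2) :
    MDE (fun y => ENNReal.ofReal (f y) * ENNReal.ofReal (w y ^ (-(1 / (p - 1))))) x ≤
      ApConst p w ^ (1 / (p - 1)) *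
        (MDwE w
          (fun y =>
            (MDwE (fun z => w z ^ (-(1 / (p - 1)))) (fun z => ENNReal.ofReal (f z)) y) ^
                (p / (p / (p - 1))) *
              (ENNReal.ofReal (w y))⁻¹) x) ^ ((p / (p - 1)) / p) := by
  have hp0 : (0:ℝ) < p := lt_trans one_pos hp
  have hp1 : (0:ℝ) < p - 1 := sub_pos.mpr hp
  have he1 : p / (p / (p - 1)) = p - 1 := by
    field_simp
  have he2 : (p / (p - 1)) / p = 1 / (p - 1) := by
    field_simp
  rw [he2]
  simp only [he1, MDE]
  refine iSup_le fun k => iSup_le fun m => iSup_le fun hx => ?_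
  -- Notation
  set q : ℝ := 1 / (p - 1) with hqdef
  have hq0 : 0 < q := by positivity
  set Q : Set R2 := dyadicCube k m with hQdef
  set σ : R2 → ℝ := fun z => w z ^ (-(1 / (p - 1)))
  set C : ℝ≥0∞ := ApConst p w with hCdef
  set V : ℝ≥0∞ := volume Q with hVdef
  set W : ℝ≥0∞ := ∫⁻ y in Q, ENNReal.ofReal (w y) with hWdef
  set S : ℝ≥0∞ := ∫⁻ y in Q, ENNReal.ofReal (σ y) with hSdef
  set A : ℝ≥0∞ := ∫⁻ y in Q, ENNReal.ofReal (f y) * ENNReal.ofReal (σ y) with hAdef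
  have hσpos : ∀ z, 0 < σ z := fun z => Real.rpow_pos_of_pos (hw z) _
  have hV0 : 0 < V := volume_dyadicCube_pos k m
  have hVt : V ≠ ⊤ := volume_dyadicCube_ne_top k m
  have hW0 : 0 < W :=
    setLIntegral_dyadicCube_pos hwloc.aestronglyMeasurable.aemeasurable hw k m
  have hWt : W ≠ ⊤ := (setLIntegral_dyadicCube_lt_top hwloc k m).ne
  have hS0 : 0 < S :=
    setLIntegral_dyadicCube_pos hwsloc.aestronglyMeasurable.aemeasurable hσpos k m
  have hSt : S ≠ ⊤ := (setLIntegral_dyadicCube_lt_top hwsloc k m).ne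
  -- The A_p inequality for the cube Q
  have hApQ : W * S ^ (p - 1) ≤ C * V ^ p := by
    have hub : (W ^ (1/p) * S ^ (1 - 1/p)) / V ≤ C ^ (1/p) := by
      have hC : C ^ (1/p) = ⨆ (B : Set R2) (_ : IsBallOrSquare B),
          ((∫⁻ y in B, ENNReal.ofReal (w y)) ^ (1 / p) *
            (∫⁻ y in B, ENNReal.ofReal (σ y)) ^ (1 - 1 / p)) / volume B := by
        rw [hCdef, ApConst, ← ENNReal.rpow_mul, mul_one_div_cancel hp0.ne', ENNReal.rpow_one]
      rw [hC]
      exact le_iSup_of_le Q (le_iSup_of_le (isBallOrSquare_dyadicCube k m) le_rfl)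
    have h1 : W ^ (1/p) * S ^ (1 - 1/p) ≤ C ^ (1/p) * V := by
      have := mul_le_mul_left hub V
      rwa [ENNReal.div_mul_cancel hV0.ne' hVt] at this
    have h2 := ENNReal.rpow_le_rpow h1 hp0.le
    rw [ENNReal.mul_rpow_of_nonneg _ _ hp0.le, ENNReal.mul_rpow_of_nonneg _ _ hp0.le,
      ← ENNReal.rpow_mul, ← ENNReal.rpow_mul, ← ENNReal.rpow_mul] at h2
    have ea : (1/p) * p = 1 := by field_simp
    have eb : (1 - 1/p) * p = p - 1 := by field_simp
    rwa [ea, eb, ENNReal.rpow_one, ENNReal.rpow_one] at h2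
  -- lower bound for the weighted maximal function of f w.r.t. σ, for points of Q
  have hMD : ∀ y ∈ Q, S⁻¹ * A ≤
      MDwE σ (fun z => ENNReal.ofReal (f z)) y := by
    intro y hy
    exact le_iSup_of_le k (le_iSup_of_le m (le_iSup_of_le hy le_rfl))
  -- lower bound for the inner integral
  set IG : ℝ≥0∞ := ∫⁻ y in Q,
      ((MDwE σ (fun z => ENNReal.ofReal (f z)) y) ^ (p - 1) * (ENNReal.ofReal (w y))⁻¹)
        * ENNReal.ofReal (w y) with hIGdef
  have hIG : (S⁻¹ * A) ^ (p - 1) * V ≤ IG := by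
    have hconst : ∫⁻ _ in Q, (S⁻¹ * A) ^ (p - 1) = (S⁻¹ * A) ^ (p - 1) * V :=
      setLIntegral_const Q _
    rw [← hconst]
    refine setLIntegral_mono' (measurableSet_dyadicCube k m) fun y hy => ?_
    have hcancel : ((MDwE σ (fun z => ENNReal.ofReal (f z)) y) ^ (p - 1)
          * (ENNReal.ofReal (w y))⁻¹) * ENNReal.ofReal (w y)
        = (MDwE σ (fun z => ENNReal.ofReal (f z)) y) ^ (p - 1) := by
      rw [mul_assoc, ENNReal.inv_mul_cancel (ENNReal.ofReal_pos.mpr (hw y)).ne'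
        ENNReal.ofReal_ne_top, mul_one]
    rw [hcancel]
    exact ENNReal.rpow_le_rpow (hMD y hy) hp1.le
  -- lower bound for the outer weighted maximal function
  have hMle : W⁻¹ * IG ≤ MDwE w
      (fun y => (MDwE σ (fun z => ENNReal.ofReal (f z)) y) ^ (p - 1)
        * (ENNReal.ofReal (w y))⁻¹) x :=
    le_iSup_of_le k (le_iSup_of_le m (le_iSup_of_le hx le_rfl))
  -- the key scalar inequality
  have hWq0 : W ^ q ≠ 0 := (ENNReal.rpow_pos hW0 hWt).ne'
  have hWqt : W ^ q ≠ ⊤ := ENNReal.rpow_ne_top_of_nonneg hq0.le hWt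
  have hWS0 : W ^ q * S ≠ 0 := mul_ne_zero hWq0 hS0.ne'
  have hWSt : W ^ q * S ≠ ⊤ := mul_ne_top hWqt hSt
  have epq : (p - 1) * q = 1 := by rw [hqdef]; field_simp
  have key : V⁻¹ ≤ C ^ q * ((W ^ q)⁻¹ * (S⁻¹ * V ^ q)) := by
    have h3 := ENNReal.rpow_le_rpow hApQ hq0.le
    rw [ENNReal.mul_rpow_of_nonneg _ _ hq0.le, ENNReal.mul_rpow_of_nonneg _ _ hq0.le,
      ← ENNReal.rpow_mul S, epq, ENNReal.rpow_one, ← ENNReal.rpow_mul V] at h3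
    have epq1 : p * q = q + 1 := by rw [hqdef]; field_simp; ring
    rw [epq1, ENNReal.rpow_add q 1 hV0.ne' hVt, ENNReal.rpow_one] at h3
    -- h3 : W ^ q * S ≤ C ^ q * (V ^ q * V)
    calc V⁻¹ = V⁻¹ * ((W ^ q * S) * (W ^ q * S)⁻¹) := by
          rw [ENNReal.mul_inv_cancel hWS0 hWSt, mul_one]
      _ ≤ V⁻¹ * ((C ^ q * (V ^ q * V)) * (W ^ q * S)⁻¹) :=
          mul_le_mul_right (mul_le_mul_left h3 _) _
      _ = (C ^ q * V ^ q * (W ^ q * S)⁻¹) * (V⁻¹ * V) := by ring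
      _ = C ^ q * V ^ q * (W ^ q * S)⁻¹ := by
          rw [ENNReal.inv_mul_cancel hV0.ne' hVt, mul_one]
      _ = C ^ q * ((W ^ q)⁻¹ * (S⁻¹ * V ^ q)) := by
          rw [ENNReal.mul_inv (Or.inl hWq0) (Or.inl hWqt)]; ring
  -- assemble
  calc V⁻¹ * A ≤ (C ^ q * ((W ^ q)⁻¹ * (S⁻¹ * V ^ q))) * A := mul_le_mul_left key A
    _ = C ^ q * ((W ^ q)⁻¹ * (S⁻¹ * A * V ^ q)) := by ring
    _ = C ^ q * (W⁻¹ * ((S⁻¹ * A) ^ (p-1) * V)) ^ q := by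
        rw [ENNReal.mul_rpow_of_nonneg _ _ hq0.le, ENNReal.mul_rpow_of_nonneg _ _ hq0.le,
          ENNReal.inv_rpow, ← ENNReal.rpow_mul, epq, ENNReal.rpow_one]
    _ ≤ C ^ q * (W⁻¹ * IG) ^ q := by
        exact mul_le_mul_right (ENNReal.rpow_le_rpow (mul_le_mul_right hIG _) hq0.le) _
    _ ≤ C ^ q * (MDwE w
        (fun y => (MDwE σ (fun z => ENNReal.ofReal (f z)) y) ^ (p - 1)
          * (ENNReal.ofReal (w y))⁻¹) x) ^ q :=
        mul_le_mul_right (ENNReal.rpow_le_rpow hMle hq0.le) _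
end
end

section
/- There is an absolute constant C such that for every 1 < p < ∞ and every 0 < δ < 1, the power weight w(x) := |x|^{2δ(p−1)} on ℝ² satisfies [w]_{A_p} ≤ C^p (1−δ)^{−(p−1)}; in particular [w]_{A_p}^{1/(p−1)} ≤ C²(1−δ)^{−1}. -/
open MeasureTheory ENNReal

noncomputable section

lemma npow_rpow {b : ℝ} (hb : 0 ≤ b) (m : ℕ) (z : ℝ) :
    (b ^ m : ℝ) ^ z = b ^ ((m : ℝ) * z) := by
  rw [← Real.rpow_natCast b m, ← Real.rpow_mul hb]


lemma volume_square (a : Fin 2 → ℝ) (s : ℝ) :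
    volume {x : R2 | ∀ i, a i ≤ x i ∧ x i < a i + s} = ENNReal.ofReal s ^ 2 := by
  have h : {x : R2 | ∀ i, a i ≤ x i ∧ x i < a i + s} =
      (MeasurableEquiv.toLp 2 (Fin 2 → ℝ)).symm ⁻¹'
        (Set.univ.pi fun i => Set.Ico (a i) (a i + s)) := by
    ext x
    simp [Set.mem_pi, Set.mem_Ico]
  rw [h, (EuclideanSpace.volume_preserving_symm_measurableEquiv_toLp (Fin 2)).measure_preimage
    ((MeasurableSet.univ_pi fun i => measurableSet_Ico).nullMeasurableSet)]
  rw [volume_pi_pi]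
  simp [Real.volume_Ico, sq]

lemma vol_cb (r : ℝ) (hr : 0 ≤ r) :
    volume (Metric.closedBall (0 : R2) r) = ENNReal.ofReal (Real.pi * r ^ 2) := by
  rw [EuclideanSpace.volume_closedBall]
  have hcard : (Fintype.card (Fin 2)) = 2 := by simp
  rw [hcard]
  have hgamma : Real.sqrt Real.pi ^ 2 / Real.Gamma ((2:ℕ) / 2 + 1) = Real.pi := by
    rw [Real.sq_sqrt Real.pi_nonneg]
    norm_num [Real.Gamma_two]
  rw [hgamma, ← ENNReal.ofReal_pow hr, ← ENNReal.ofReal_mul (by positivity), mul_comm]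

lemma L2 (δ R : ℝ) (hδ0 : 0 < δ) (hδ1 : δ < 1) (hR : 0 < R) :
    ∫⁻ x in Metric.closedBall (0 : R2) R, ENNReal.ofReal (‖x‖ ^ (-(2 * δ))) ≤
      ENNReal.ofReal (17 * (R ^ (2 - 2 * δ) / (1 - δ))) := by
  classical
  set w : ℝ := 1/2 with hw
  have hw0 : (0:ℝ) < w := by norm_num
  set f : R2 → ℝ≥0∞ := fun x => ENNReal.ofReal (‖x‖ ^ (-(2 * δ))) with hf
  set A : ℕ → Set R2 := fun k =>
    Metric.closedBall 0 (R * w ^ k) \ Metric.closedBall 0 (R * w ^ (k+1)) with hA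
  -- cover
  have hcover : Metric.closedBall (0:R2) R ⊆ {0} ∪ ⋃ k, A k := by
    intro x hx
    rcases eq_or_ne x 0 with rfl | hx0
    · exact Set.mem_union_left _ rfl
    right
    have hxpos : 0 < ‖x‖ := norm_pos_iff.2 hx0
    have hxR : ‖x‖ ≤ R := mem_closedBall_zero_iff.1 hx
    have hex : ∃ n : ℕ, w ^ n < ‖x‖ / R :=
      exists_pow_lt_of_lt_one (div_pos hxpos hR) (by norm_num)
    have hn : w ^ (Nat.find hex) < ‖x‖ / R := Nat.find_spec hex
    have hn0 : Nat.find hex ≠ 0 := by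
      intro h
      rw [h, pow_zero] at hn
      have : R < ‖x‖ := by
        rw [lt_div_iff₀ hR] at hn; linarith
      linarith
    obtain ⟨k, hk⟩ := Nat.exists_eq_succ_of_ne_zero hn0
    have hmin : ¬ (w ^ k < ‖x‖ / R) := Nat.find_min hex (by omega)
    refine Set.mem_iUnion.2 ⟨k, ?_, ?_⟩
    · rw [Metric.mem_closedBall, dist_zero_right]
      push_neg at hmin
      rw [div_le_iff₀ hR] at hmin
      linarith [hmin]
    · intro hmem
      rw [Metric.mem_closedBall, dist_zero_right] at hmem
      rw [hk, lt_div_iff₀ hR] at hn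
      simp only [Nat.succ_eq_add_one] at hn
      nlinarith
  -- constants
  set cc : ℝ := Real.pi * (R ^ (2 - 2*δ) * w ^ (-(2*δ))) with hcc
  set rr : ℝ := w ^ (2 - 2*δ) with hrr
  have hT : (0:ℝ) ≤ R ^ (2 - 2*δ) := Real.rpow_nonneg hR.le _
  have hccpos : 0 ≤ cc := by
    have := Real.rpow_nonneg hw0.le (-(2*δ)); positivity
  have hrr0 : 0 ≤ rr := Real.rpow_nonneg hw0.le _
  -- per-annulus bound
  have hann : ∀ k : ℕ, ∫⁻ x in A k, f x ≤ ENNReal.ofReal cc * ENNReal.ofReal rr ^ k := by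
    intro k
    have hrad : (0:ℝ) < R * w ^ (k+1) := by positivity
    have hstep : ∫⁻ x in A k, f x ≤
        ENNReal.ofReal ((R * w ^ (k+1)) ^ (-(2*δ))) * volume (A k) := by
      rw [← setLIntegral_const]
      refine setLIntegral_mono measurable_const fun x hx => ?_
      refine ENNReal.ofReal_le_ofReal ?_
      have hx2 : R * w ^ (k+1) < ‖x‖ := by
        have := hx.2
        rw [Metric.mem_closedBall, dist_zero_right, not_le] at this
        exact this
      exact Real.rpow_le_rpow_of_nonpos hrad hx2.le (by linarith)
    have hvolA : volume (A k) ≤ ENNReal.ofReal (Real.pi * (R * w ^ k) ^ 2) := by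
      rw [← vol_cb _ (by positivity)]
      exact measure_mono Set.diff_subset
    calc ∫⁻ x in A k, f x
        ≤ ENNReal.ofReal ((R * w ^ (k+1)) ^ (-(2*δ))) *
            ENNReal.ofReal (Real.pi * (R * w ^ k) ^ 2) := by
          refine hstep.trans ?_
          gcongr
      _ = ENNReal.ofReal ((R * w ^ (k+1)) ^ (-(2*δ)) * (Real.pi * (R * w ^ k) ^ 2)) := by
          rw [← ENNReal.ofReal_mul (Real.rpow_nonneg (by positivity) _)]
      _ = ENNReal.ofReal (cc * rr ^ k) := by
          congr 1
          have e1 : (R * w ^ (k+1)) ^ (-(2*δ)) =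
              R ^ (-(2*δ)) * w ^ (((k:ℝ)+1) * (-(2*δ))) := by
            rw [Real.mul_rpow hR.le (by positivity), npow_rpow hw0.le]
            congr 2
            push_cast
            ring
          have e2 : rr ^ k = w ^ ((2 - 2*δ) * (k:ℝ)) := by
            rw [hrr, ← Real.rpow_natCast (w ^ (2-2*δ)) k, ← Real.rpow_mul hw0.le]
          have e3 : (R * w ^ k) ^ 2 = R ^ ((2:ℝ)) * w ^ ((k:ℝ) * 2) := by
            rw [mul_pow, ← Real.rpow_natCast R 2, ← Real.rpow_natCast (w ^ k) 2,
              npow_rpow hw0.le]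
            norm_num
          rw [e1, e2, e3, hcc]
          rw [show R ^ (-(2*δ)) * w ^ (((k:ℝ)+1) * (-(2*δ))) *
              (Real.pi * (R ^ ((2:ℝ)) * w ^ ((k:ℝ) * 2))) =
              Real.pi * ((R ^ (-(2*δ)) * R ^ ((2:ℝ))) *
                (w ^ (((k:ℝ)+1) * (-(2*δ))) * w ^ ((k:ℝ) * 2))) by ring]
          rw [← Real.rpow_add hR, ← Real.rpow_add hw0]
          rw [show Real.pi * (R ^ (2 - 2*δ) * w ^ (-(2*δ))) * w ^ ((2 - 2*δ) * (k:ℝ)) =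
              Real.pi * (R ^ (2 - 2*δ) * (w ^ (-(2*δ)) * w ^ ((2 - 2*δ) * (k:ℝ)))) by ring,
            ← Real.rpow_add hw0]
          congr 2
          · ring
          · ring
      _ = ENNReal.ofReal cc * ENNReal.ofReal rr ^ k := by
          rw [ENNReal.ofReal_mul hccpos, ENNReal.ofReal_pow hrr0]
  -- sum up
  have hsum : ∫⁻ x in Metric.closedBall (0:R2) R, f x ≤
      ENNReal.ofReal cc * (1 - ENNReal.ofReal rr)⁻¹ := by
    calc ∫⁻ x in Metric.closedBall (0:R2) R, f x
        ≤ ∫⁻ x in ({0} ∪ ⋃ k, A k : Set R2), f x := lintegral_mono_set hcover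
      _ ≤ (∫⁻ x in ({0} : Set R2), f x) + ∫⁻ x in (⋃ k, A k), f x := lintegral_union_le _ _ _
      _ ≤ 0 + ∑' k, ∫⁻ x in A k, f x := by
          apply add_le_add
          · refine le_of_eq (setLIntegral_measure_zero _ _ ?_)
            have : ({0} : Set R2) = Metric.closedBall 0 0 := by
              simp [Metric.closedBall_zero]
            rw [this, vol_cb 0 le_rfl]
            simp
          · exact lintegral_iUnion_le _ _
      _ ≤ ∑' k, ENNReal.ofReal cc * ENNReal.ofReal rr ^ k := by
          rw [zero_add]
          exact ENNReal.tsum_le_tsum hann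
      _ = ENNReal.ofReal cc * ∑' k, ENNReal.ofReal rr ^ k := ENNReal.tsum_mul_left
      _ = ENNReal.ofReal cc * (1 - ENNReal.ofReal rr)⁻¹ := by rw [ENNReal.tsum_geometric]
  refine hsum.trans ?_
  -- bound the geometric factor
  set u : ℝ := 3/4 * (1 - δ) with hu
  have hu0 : 0 < u := by rw [hu]; linarith
  have hrru : rr ≤ 1 - u := by
    have h4 : rr = (1 + (-3/4) : ℝ) ^ (1 - δ) := by
      rw [hrr, hw, show (2 - 2*δ) = (2:ℝ) * (1-δ) by ring, Real.rpow_mul (by norm_num)]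
      norm_num
    rw [h4, hu]
    have := _root_.rpow_one_add_le_one_add_mul_self (by norm_num : (-1:ℝ) ≤ -3/4)
      (by linarith : (0:ℝ) ≤ 1 - δ) (by linarith : (1:ℝ) - δ ≤ 1)
    linarith
  have hinv : (1 - ENNReal.ofReal rr)⁻¹ ≤ ENNReal.ofReal u⁻¹ := by
    have h1 : ENNReal.ofReal u ≤ 1 - ENNReal.ofReal rr := by
      have : ENNReal.ofReal u = 1 - ENNReal.ofReal (1 - u) := by
        rw [← ENNReal.ofReal_one, ← ENNReal.ofReal_sub _ (by rw [hu]; nlinarith)]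
        norm_num
      rw [this]
      exact tsub_le_tsub_left (ENNReal.ofReal_le_ofReal hrru) _
    rw [ENNReal.ofReal_inv_of_pos hu0]
    exact ENNReal.inv_le_inv' h1
  calc ENNReal.ofReal cc * (1 - ENNReal.ofReal rr)⁻¹
      ≤ ENNReal.ofReal cc * ENNReal.ofReal u⁻¹ := by gcongr
    _ = ENNReal.ofReal (cc * u⁻¹) := (ENNReal.ofReal_mul hccpos).symm
    _ ≤ ENNReal.ofReal (17 * (R ^ (2 - 2*δ) / (1 - δ))) := by
        apply ENNReal.ofReal_le_ofReal
        have hwb : w ^ (-(2*δ)) ≤ 4 := by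
          have h1 : w ^ (-(2*δ)) ≤ w ^ ((-2:ℝ)) :=
            Real.rpow_le_rpow_of_exponent_ge hw0 (by norm_num) (by linarith)
          have h2 : w ^ ((-2:ℝ)) = 4 := by
            rw [hw, Real.rpow_neg (by norm_num)]
            rw [show ((2:ℝ)) = ((2:ℕ):ℝ) by norm_num, Real.rpow_natCast]
            norm_num
          linarith
        have hpi : Real.pi ≤ 3.15 := by linarith [Real.pi_lt_d2]
        have hW : (0:ℝ) ≤ w ^ (-(2*δ)) := Real.rpow_nonneg hw0.le _
        have hu' : u⁻¹ = 4/3 * (1-δ)⁻¹ := by rw [hu, mul_inv]; norm_num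
        have hkey : Real.pi * w ^ (-(2*δ)) * (4/3) ≤ 17 := by nlinarith [Real.pi_nonneg]
        rw [hcc, hu']
        calc Real.pi * (R ^ (2 - 2*δ) * w ^ (-(2*δ))) * (4/3 * (1-δ)⁻¹)
            = (Real.pi * w ^ (-(2*δ)) * (4/3)) * (R ^ (2 - 2*δ) * (1-δ)⁻¹) := by ring
          _ ≤ 17 * (R ^ (2 - 2*δ) * (1-δ)⁻¹) :=
              mul_le_mul_of_nonneg_right hkey
                (mul_nonneg hT (inv_nonneg.2 (by linarith)))
          _ = 17 * (R ^ (2 - 2*δ) / (1-δ)) := by rw [div_eq_mul_inv]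

lemma L1 (B : Set R2) (hB : IsBallOrSquare B) :
    ∃ (c : R2) (ρ : ℝ), 0 < ρ ∧ B ⊆ Metric.closedBall c ρ ∧
      ENNReal.ofReal (ρ ^ 2) ≤ 4 * volume B := by
  rcases hB with ⟨c, r, hr, rfl⟩ | ⟨a, s, hs, rfl⟩
  · refine ⟨c, r, hr, Metric.ball_subset_closedBall, ?_⟩
    rw [EuclideanSpace.volume_ball]
    have hcard : (Fintype.card (Fin 2)) = 2 := by simp
    rw [hcard]
    have hgamma : Real.sqrt Real.pi ^ 2 / Real.Gamma ((2:ℕ) / 2 + 1) = Real.pi := by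
      rw [Real.sq_sqrt Real.pi_nonneg]
      norm_num [Real.Gamma_two]
    rw [hgamma]
    calc ENNReal.ofReal (r ^ 2) = ENNReal.ofReal r ^ 2 * 1 := by
          rw [ENNReal.ofReal_pow hr.le, mul_one]
      _ ≤ 4 * (ENNReal.ofReal r ^ 2 * ENNReal.ofReal Real.pi) := by
          rw [← mul_assoc, mul_comm (4 : ℝ≥0∞) _, mul_assoc]
          gcongr
          calc (1:ℝ≥0∞) ≤ ENNReal.ofReal Real.pi := by
                rw [show (1:ℝ≥0∞) = ENNReal.ofReal 1 by simp]
                exact ENNReal.ofReal_le_ofReal (by nlinarith [Real.pi_gt_three])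
            _ ≤ 4 * ENNReal.ofReal Real.pi := le_mul_of_one_le_left zero_le (by norm_num)
  · set c : R2 := (WithLp.equiv 2 (Fin 2 → ℝ)).symm a with hc
    refine ⟨c, 2 * s, by linarith, ?_, ?_⟩
    · intro x hx
      simp only [Set.mem_setOf_eq] at hx
      rw [Metric.mem_closedBall, EuclideanSpace.dist_eq]
      have hb : ∀ i : Fin 2, dist (x i) (c i) ^ 2 ≤ s ^ 2 := by
        intro i
        have hci : c i = a i := rfl
        rw [hci, Real.dist_eq, sq_abs]
        have h1 := (hx i).1
        have h2 := (hx i).2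
        nlinarith
      have hsum : ∑ i : Fin 2, dist (x i) (c i) ^ 2 ≤ (2*s) ^ 2 := by
        calc ∑ i : Fin 2, dist (x i) (c i) ^ 2 ≤ ∑ _i : Fin 2, s ^ 2 :=
              Finset.sum_le_sum fun i _ => hb i
          _ ≤ (2*s)^2 := by simp [Finset.sum_const]; nlinarith
      calc Real.sqrt (∑ i : Fin 2, dist (x i) (c i) ^ 2) ≤ Real.sqrt ((2*s)^2) :=
            Real.sqrt_le_sqrt hsum
        _ = 2 * s := Real.sqrt_sq (by linarith)
    · rw [volume_square]
      rw [← ENNReal.ofReal_pow hs.le, show ((2:ℝ)*s)^2 = 4 * s^2 by ring,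
        ENNReal.ofReal_mul (by norm_num)]
      simp

lemma helper {p : ℝ} (hp : 1 < p) (V I1 I2 : ℝ≥0∞) (hV0 : V ≠ 0) (hVt : V ≠ ⊤)
    {A1 A2 T : ℝ} (hA1 : 0 ≤ A1) (hA2 : 0 ≤ A2)
    (h1 : I1 ≤ ENNReal.ofReal A1 * V) (h2 : I2 ≤ ENNReal.ofReal A2 * V)
    (hT : A1 ^ (1 / p) * A2 ^ (1 - 1 / p) ≤ T) :
    I1 ^ (1 / p) * I2 ^ (1 - 1 / p) / V ≤ ENNReal.ofReal T := by
  have hp0 : (0:ℝ) ≤ 1 / p := by positivity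
  have hq0 : (0:ℝ) ≤ 1 - 1 / p := by
    rw [sub_nonneg]
    rw [div_le_one (by linarith)]; linarith
  calc I1 ^ (1 / p) * I2 ^ (1 - 1 / p) / V
      ≤ (ENNReal.ofReal A1 * V) ^ (1 / p) * (ENNReal.ofReal A2 * V) ^ (1 - 1 / p) / V := by
        gcongr
    _ = ENNReal.ofReal A1 ^ (1 / p) * ENNReal.ofReal A2 ^ (1 - 1 / p) *
          (V ^ (1 / p) * V ^ (1 - 1 / p)) / V := by
        rw [ENNReal.mul_rpow_of_nonneg _ _ hp0, ENNReal.mul_rpow_of_nonneg _ _ hq0]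
        ring_nf
    _ = ENNReal.ofReal A1 ^ (1 / p) * ENNReal.ofReal A2 ^ (1 - 1 / p) := by
        rw [← ENNReal.rpow_add _ _ hV0 hVt, show 1/p + (1-1/p) = 1 by ring, ENNReal.rpow_one,
          mul_div_assoc, ENNReal.div_self hV0 hVt, mul_one]
    _ = ENNReal.ofReal (A1 ^ (1 / p) * A2 ^ (1 - 1 / p)) := by
        rw [ENNReal.ofReal_rpow_of_nonneg hA1 hp0, ENNReal.ofReal_rpow_of_nonneg hA2 hq0,
          ← ENNReal.ofReal_mul (by positivity)]
    _ ≤ ENNReal.ofReal T := ENNReal.ofReal_le_ofReal hT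

lemma key (p δ : ℝ) (hp : 1 < p) (hδ0 : 0 < δ) (hδ1 : δ < 1) (B : Set R2)
    (hB : IsBallOrSquare B) :
    (∫⁻ x in B, ENNReal.ofReal (‖x‖ ^ (2 * δ * (p - 1)))) ^ (1 / p) *
      (∫⁻ x in B, ENNReal.ofReal ((‖x‖ ^ (2 * δ * (p - 1))) ^ (-(1 / (p - 1))))) ^ (1 - 1 / p) /
      volume B ≤ ENNReal.ofReal ((1000 / (1 - δ)) ^ (1 - 1 / p)) := by
  have hp1 : (0:ℝ) < p - 1 := by linarith
  have hp0 : (0:ℝ) < p := by linarith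
  have hδ1' : (0:ℝ) < 1 - δ := by linarith
  have hα : (0:ℝ) ≤ 2 * δ * (p - 1) := by positivity
  have hq0 : (0:ℝ) ≤ 1 - 1 / p := by
    rw [sub_nonneg, div_le_one hp0]; linarith
  have hint : ∀ x : R2,
      ((‖x‖ ^ (2 * δ * (p - 1))) ^ (-(1 / (p - 1)))) = ‖x‖ ^ (-(2 * δ)) := by
    intro x
    rw [← Real.rpow_mul (norm_nonneg x)]
    congr 1
    field_simp
  simp only [hint]
  have hexp : ∀ M : ℝ, 0 ≤ M →
      (M ^ (2 * δ * (p - 1))) ^ (1 / p) = (M ^ (2 * δ)) ^ (1 - 1 / p) := by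
    intro M hM
    rw [← Real.rpow_mul hM, ← Real.rpow_mul hM]
    congr 1
    field_simp
  obtain ⟨c, ρ, hρ, hsub, hvol⟩ := L1 B hB
  have hV0 : volume B ≠ 0 := by
    intro h
    rw [h, mul_zero] at hvol
    have h0 : ENNReal.ofReal (ρ ^ 2) = 0 := le_antisymm hvol zero_le
    rw [ENNReal.ofReal_eq_zero] at h0
    nlinarith
  have hVt : volume B ≠ ⊤ :=
    (lt_of_le_of_lt (measure_mono hsub) measure_closedBall_lt_top).ne
  have hnorm : ∀ x ∈ B, |‖x‖ - ‖c‖| ≤ ρ := by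
    intro x hx
    have hd : dist x c ≤ ρ := hsub hx
    calc |‖x‖ - ‖c‖| ≤ ‖x - c‖ := abs_norm_sub_norm_le x c
      _ = dist x c := (dist_eq_norm x c).symm
      _ ≤ ρ := hd
  by_cases hc : 2 * ρ ≤ ‖c‖
  · -- far case
    have hc0 : (0:ℝ) < ‖c‖ := by linarith
    have hub : ∀ x ∈ B, ‖x‖ ≤ 3 / 2 * ‖c‖ := by
      intro x hx
      have := abs_le.1 (hnorm x hx)
      linarith [this.2]
    have hlb : ∀ x ∈ B, ‖c‖ / 2 ≤ ‖x‖ := by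
      intro x hx
      have := abs_le.1 (hnorm x hx)
      linarith [this.1]
    have h1 : ∫⁻ x in B, ENNReal.ofReal (‖x‖ ^ (2 * δ * (p - 1))) ≤
        ENNReal.ofReal ((3 / 2 * ‖c‖) ^ (2 * δ * (p - 1))) * volume B := by
      rw [← setLIntegral_const]
      exact setLIntegral_mono measurable_const fun x hx =>
        ENNReal.ofReal_le_ofReal (Real.rpow_le_rpow (norm_nonneg x) (hub x hx) hα)
    have h2 : ∫⁻ x in B, ENNReal.ofReal (‖x‖ ^ (-(2 * δ))) ≤
        ENNReal.ofReal ((‖c‖ / 2) ^ (-(2 * δ))) * volume B := by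
      rw [← setLIntegral_const]
      exact setLIntegral_mono measurable_const fun x hx =>
        ENNReal.ofReal_le_ofReal
          (Real.rpow_le_rpow_of_nonpos (half_pos hc0) (hlb x hx) (by linarith))
    refine helper hp (volume B) _ _ hV0 hVt (Real.rpow_nonneg (by positivity) _)
      (Real.rpow_nonneg (by positivity) _) h1 h2 ?_
    rw [hexp _ (by positivity),
      ← Real.mul_rpow (Real.rpow_nonneg (by positivity) _) (Real.rpow_nonneg (by positivity) _)]
    refine Real.rpow_le_rpow (by positivity) ?_ hq0
    have hin : (3 / 2 * ‖c‖) ^ (2 * δ) * (‖c‖ / 2) ^ (-(2 * δ)) = (3:ℝ) ^ (2 * δ) := by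
      rw [Real.rpow_neg (by positivity), ← div_eq_mul_inv,
        ← Real.div_rpow (by positivity) (by positivity)]
      congr 1
      field_simp
    rw [hin]
    have h9 : (3:ℝ) ^ (2 * δ) ≤ 9 := by
      have h := Real.rpow_le_rpow_of_exponent_le (by norm_num : (1:ℝ) ≤ 3)
        (by linarith : 2 * δ ≤ 2)
      rw [show ((2:ℝ)) = ((2:ℕ):ℝ) by norm_num, Real.rpow_natCast] at h
      norm_num at h
      linarith
    have h1000 : (9:ℝ) ≤ 1000 / (1 - δ) := by
      rw [le_div_iff₀ hδ1']
      nlinarith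
    linarith
  · -- near case
    push_neg at hc
    have hub : ∀ x ∈ B, ‖x‖ ≤ 3 * ρ := by
      intro x hx
      have := abs_le.1 (hnorm x hx)
      linarith [this.2]
    have hsub0 : B ⊆ Metric.closedBall 0 (3 * ρ) := fun x hx =>
      mem_closedBall_zero_iff.2 (hub x hx)
    set K : ℝ := 17 * ((3 * ρ) ^ (2 - 2 * δ) / (1 - δ)) with hK
    have hK0 : (0:ℝ) ≤ K := by
      have := Real.rpow_nonneg (by positivity : (0:ℝ) ≤ 3 * ρ) (2 - 2 * δ)
      rw [hK]; positivity
    set A2 : ℝ := 4 * K / ρ ^ 2 with hA2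
    have hA2n : (0:ℝ) ≤ A2 := by rw [hA2]; positivity
    have h2' : ∫⁻ x in B, ENNReal.ofReal (‖x‖ ^ (-(2 * δ))) ≤ ENNReal.ofReal K :=
      (lintegral_mono_set hsub0).trans (L2 δ (3 * ρ) hδ0 hδ1 (by linarith))
    have h2 : ∫⁻ x in B, ENNReal.ofReal (‖x‖ ^ (-(2 * δ))) ≤
        ENNReal.ofReal A2 * volume B := by
      refine h2'.trans ?_
      have h4 : (4:ℝ≥0∞) * ENNReal.ofReal K ≤ 4 * (ENNReal.ofReal A2 * volume B) := by
        calc (4:ℝ≥0∞) * ENNReal.ofReal K = ENNReal.ofReal (A2 * ρ ^ 2) := by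
              rw [show (4:ℝ≥0∞) = ENNReal.ofReal (4:ℝ) by norm_num,
                ← ENNReal.ofReal_mul (by norm_num)]
              congr 1
              rw [hA2]
              field_simp
          _ = ENNReal.ofReal A2 * ENNReal.ofReal (ρ ^ 2) :=
              ENNReal.ofReal_mul hA2n
          _ ≤ ENNReal.ofReal A2 * (4 * volume B) := mul_le_mul_right hvol _
          _ = 4 * (ENNReal.ofReal A2 * volume B) := by ring
      exact (ENNReal.mul_le_mul_iff_right (by norm_num) (by norm_num)).1 h4
    have h1 : ∫⁻ x in B, ENNReal.ofReal (‖x‖ ^ (2 * δ * (p - 1))) ≤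
        ENNReal.ofReal ((3 * ρ) ^ (2 * δ * (p - 1))) * volume B := by
      rw [← setLIntegral_const]
      exact setLIntegral_mono measurable_const fun x hx =>
        ENNReal.ofReal_le_ofReal (Real.rpow_le_rpow (norm_nonneg x) (hub x hx) hα)
    refine helper hp (volume B) _ _ hV0 hVt (Real.rpow_nonneg (by positivity) _)
      hA2n h1 h2 ?_
    rw [hexp _ (by positivity),
      ← Real.mul_rpow (Real.rpow_nonneg (by positivity) _) hA2n]
    refine Real.rpow_le_rpow (by positivity) ?_ hq0
    have hcomb : (3 * ρ) ^ (2 * δ) * (3 * ρ) ^ (2 - 2 * δ) = 9 * ρ ^ 2 := by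
      rw [← Real.rpow_add (by positivity), show 2 * δ + (2 - 2 * δ) = (2:ℝ) by ring,
        show ((2:ℝ)) = ((2:ℕ):ℝ) by norm_num, Real.rpow_natCast]
      ring
    have hval : (3 * ρ) ^ (2 * δ) * A2 = 612 / (1 - δ) := by
      rw [hA2, hK]
      rw [show (3 * ρ) ^ (2 * δ) * (4 * (17 * ((3 * ρ) ^ (2 - 2 * δ) / (1 - δ))) / ρ ^ 2)
          = ((3 * ρ) ^ (2 * δ) * (3 * ρ) ^ (2 - 2 * δ)) * 68 / (1 - δ) / ρ ^ 2 by ring, hcomb]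
      rw [show (9 * ρ ^ 2) * 68 / (1 - δ) / ρ ^ 2 = (612 / (1 - δ)) * (ρ ^ 2 / ρ ^ 2) by ring]
      rw [div_self (by positivity : (ρ:ℝ) ^ 2 ≠ 0), mul_one]
    rw [hval]
    rw [div_le_div_iff₀ hδ1' hδ1']
    nlinarith

/-- `A_p` characteristic of the power weight `|x|^{2δ(p-1)}`:
`[w]_{A_p} ≤ C^p (1-δ)^{-(p-1)}`, hence `[w]_{A_p}^{1/(p-1)} ≤ C² (1-δ)⁻¹`. -/
theorem stmt5 :
    ∃ C : ℝ, 0 < C ∧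
      ∀ p : ℝ, 1 < p → ∀ δ : ℝ, 0 < δ → δ < 1 →
        ApConst p (fun x : R2 => ‖x‖ ^ (2 * δ * (p - 1))) ≤
            ENNReal.ofReal (C ^ p * (1 - δ) ^ (-(p - 1))) ∧
          ApConst p (fun x : R2 => ‖x‖ ^ (2 * δ * (p - 1))) ^ (1 / (p - 1)) ≤
            ENNReal.ofReal (C ^ 2 * (1 - δ)⁻¹) := by
  refine ⟨1000, by norm_num, fun p hp δ hδ0 hδ1 => ?_⟩
  have hp0 : (0:ℝ) < p := by linarith
  have hp1 : (0:ℝ) < p - 1 := by linarith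
  have hδ1' : (0:ℝ) < 1 - δ := by linarith
  have hbase : (0:ℝ) ≤ 1000 / (1 - δ) := by positivity
  have hsup : ApConst p (fun x : R2 => ‖x‖ ^ (2 * δ * (p - 1))) ≤
      ENNReal.ofReal ((1000 / (1 - δ)) ^ (p - 1)) := by
    have h1 : (⨆ (B : Set R2) (_ : IsBallOrSquare B),
        ((∫⁻ x in B, ENNReal.ofReal (‖x‖ ^ (2 * δ * (p - 1)))) ^ (1 / p) *
          (∫⁻ x in B, ENNReal.ofReal ((‖x‖ ^ (2 * δ * (p - 1))) ^ (-(1 / (p - 1))))) ^ (1 - 1 / p)) /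
          volume B) ≤ ENNReal.ofReal ((1000 / (1 - δ)) ^ (1 - 1 / p)) :=
      iSup_le fun B => iSup_le fun hB => key p δ hp hδ0 hδ1 B hB
    calc ApConst p (fun x : R2 => ‖x‖ ^ (2 * δ * (p - 1)))
        ≤ (ENNReal.ofReal ((1000 / (1 - δ)) ^ (1 - 1 / p))) ^ p := by
          simp only [ApConst]
          exact ENNReal.rpow_le_rpow h1 hp0.le
      _ = ENNReal.ofReal (((1000 / (1 - δ)) ^ (1 - 1 / p)) ^ p) :=
          ENNReal.ofReal_rpow_of_nonneg (by positivity) hp0.le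
      _ = ENNReal.ofReal ((1000 / (1 - δ)) ^ (p - 1)) := by
          rw [← Real.rpow_mul hbase]
          congr 1
          field_simp
  constructor
  · refine hsup.trans (ENNReal.ofReal_le_ofReal ?_)
    have h2 : (1000 / (1 - δ)) ^ (p - 1) = 1000 ^ (p - 1) * (1 - δ) ^ (-(p - 1)) := by
      rw [Real.div_rpow (by norm_num) hδ1'.le, Real.rpow_neg hδ1'.le, div_eq_mul_inv]
    rw [h2]
    have h3 : (1000:ℝ) ^ (p - 1) ≤ 1000 ^ p :=
      Real.rpow_le_rpow_of_exponent_le (by norm_num) (by linarith)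
    exact mul_le_mul_of_nonneg_right h3 (Real.rpow_nonneg hδ1'.le _)
  · calc ApConst p (fun x : R2 => ‖x‖ ^ (2 * δ * (p - 1))) ^ (1 / (p - 1))
        ≤ (ENNReal.ofReal ((1000 / (1 - δ)) ^ (p - 1))) ^ (1 / (p - 1)) :=
          ENNReal.rpow_le_rpow hsup (by positivity)
      _ = ENNReal.ofReal (((1000 / (1 - δ)) ^ (p - 1)) ^ (1 / (p - 1))) :=
          ENNReal.ofReal_rpow_of_nonneg (by positivity) (by positivity)
      _ = ENNReal.ofReal (1000 / (1 - δ)) := by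
          rw [← Real.rpow_mul hbase]
          rw [mul_one_div, div_self hp1.ne', Real.rpow_one]
      _ ≤ ENNReal.ofReal (1000 ^ 2 * (1 - δ)⁻¹) := by
          apply ENNReal.ofReal_le_ofReal
          rw [div_eq_mul_inv]
          have : (0:ℝ) ≤ (1 - δ)⁻¹ := by positivity
          nlinarith
end
end

section
/- Let (X, μ) be a measure space, let φ : X → ℝ be measurable, and let C > 0, M ≥ 0, p₀ ≥ 1. Suppose that ∫_X |φ|^p dμ ≤ (Cp)^p M for every real p ≥ p₀. Then for every λ > e·p₀·C, μ({x ∈ X : |φ(x)| > λ}) ≤ M·exp(−λ/(eC)). -/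
open MeasureTheory ENNReal

noncomputable section

/-- If `∫ |φ|^p dμ ≤ (Cp)^p M` for all `p ≥ p₀`, then `φ` has exponential distribution
decay: `μ({|φ| > λ}) ≤ M exp(−λ/(eC))` for `λ > e p₀ C`. -/
theorem stmt13 {X : Type*} [MeasurableSpace X] (μ : Measure X)
    (φ : X → ℝ) (hφ : Measurable φ)
    (C M p₀ : ℝ) (hC : 0 < C) (hM : 0 ≤ M) (hp₀ : 1 ≤ p₀)
    (h : ∀ p : ℝ, p₀ ≤ p →
      (∫⁻ x, (‖φ x‖₊ : ℝ≥0∞) ^ p ∂μ) ≤ ENNReal.ofReal ((C * p) ^ p * M)) :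
    ∀ lam : ℝ, Real.exp 1 * p₀ * C < lam →
      μ {x | lam < |φ x|} ≤
        ENNReal.ofReal (M * Real.exp (-lam / (Real.exp 1 * C))) := by
  intro lam hlam
  have he : (0:ℝ) < Real.exp 1 := Real.exp_pos 1
  have hp₀pos : (0:ℝ) < p₀ := lt_of_lt_of_le one_pos hp₀
  have hlampos : (0:ℝ) < lam := lt_trans (by positivity) hlam
  set p : ℝ := lam / (Real.exp 1 * C) with hp
  have hppos : 0 < p := by positivity
  have hp₀p : p₀ ≤ p := by
    rw [hp, le_div_iff₀ (by positivity)]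
    nlinarith
  -- Chebyshev
  have hmeas : AEMeasurable (fun x => ((‖φ x‖₊ : ℝ≥0∞)) ^ p) μ := by
    exact (hφ.nnnorm.coe_nnreal_ennreal.pow_const p).aemeasurable
  have cheb : ENNReal.ofReal lam ^ p * μ {x | lam < |φ x|}
      ≤ ∫⁻ x, (‖φ x‖₊ : ℝ≥0∞) ^ p ∂μ := by
    refine le_trans ?_ (mul_meas_ge_le_lintegral₀ hmeas (ENNReal.ofReal lam ^ p))
    gcongr
    rename_i x
    intro hx
    have : ENNReal.ofReal lam ≤ (‖φ x‖₊ : ℝ≥0∞) := by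
      rw [← ENNReal.ofReal_coe_nnreal, coe_nnnorm]
      exact ENNReal.ofReal_le_ofReal (by rw [Real.norm_eq_abs]; exact hx.le)
    exact ENNReal.rpow_le_rpow this hppos.le
  have hεne : ENNReal.ofReal lam ^ p ≠ 0 := by
    simp [ENNReal.rpow_eq_zero_iff, hlampos.ne', hlampos, hppos, hppos.ne']
  have hεtop : ENNReal.ofReal lam ^ p ≠ ⊤ := by
    exact ENNReal.rpow_ne_top_of_nonneg hppos.le ENNReal.ofReal_ne_top
  have key : μ {x | lam < |φ x|} ≤
      ENNReal.ofReal ((C * p) ^ p * M) / (ENNReal.ofReal lam ^ p) := by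
    rw [ENNReal.le_div_iff_mul_le (Or.inl hεne) (Or.inl hεtop), mul_comm]
    exact le_trans cheb (h p hp₀p)
  refine le_trans key (le_of_eq ?_)
  rw [ENNReal.ofReal_rpow_of_pos hlampos,
    ← ENNReal.ofReal_div_of_pos (Real.rpow_pos_of_pos hlampos p)]
  congr 1
  have hCp : C * p = lam * (Real.exp 1)⁻¹ := by
    field_simp [hp]
    rw [hp]; field_simp
  have h1 : ((Real.exp 1)⁻¹) ^ p = Real.exp (-p) := by
    rw [Real.inv_rpow (Real.exp_pos 1).le, Real.exp_one_rpow, ← Real.exp_neg]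
  have h2 : -lam / (Real.exp 1 * C) = -p := by rw [hp]; ring
  rw [hCp, Real.mul_rpow hlampos.le (by positivity), h1, h2]
  have hlp : lam ^ p ≠ 0 := ne_of_gt (Real.rpow_pos_of_pos hlampos p)
  field_simp
end
end
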